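/- Let n ≥ 1, let V : ℝⁿ → ℝ be twice continuously differentiable on a neighborhood of 0 with V 0 = 0 and fderiv ℝ V 0 = 0, and let H denote the Hessian bilinear form of V at 0 (the second iterated Fréchet derivative of V at 0). Let f : ℝⁿ → ℝⁿ be differentiable at 0 with f 0 = 0 and let A := fderiv ℝ f 0. Assume there exists r > 0 such that for every x with 0 < ‖x‖ < r one has (fderiv ℝ V x) (f x) < 0. Then for every v ∈ ℝⁿ, H(v, A v) ≤ 0 (equivalently, the quadratic form v ↦ vᵀ(AᵀH + HA)v is negative semidefinite). -/

import Mathlib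

open Filter Topology

open Asymptotics

set_option maxHeartbeats 1000000

/-- Lemma 1, part 2: if `V` is `C²` near `0` with `V 0 = 0`, `∇V(0) = 0`, and the
orbital derivative `(fderiv ℝ V x) (f x)` is negative for all small nonzero `x`,
then the Hessian `H` of `V` at `0` satisfies `H(v, A v) ≤ 0` for every `v`,
where `A = fderiv ℝ f 0`. -/
theorem lyapunov_hessian_lyapunov_inequality
    (n : ℕ) (hn : 1 ≤ n)
    (V : EuclideanSpace ℝ (Fin n) → ℝ)
    (U : Set (EuclideanSpace ℝ (Fin n))) (hU : IsOpen U) (h0U : (0 : EuclideanSpace ℝ (Fin n)) ∈ U)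
    (hV : ContDiffOn ℝ 2 V U)
    (hV0 : V 0 = 0)
    (hdV0 : fderiv ℝ V 0 = 0)
    (f : EuclideanSpace ℝ (Fin n) → EuclideanSpace ℝ (Fin n))
    (hf : DifferentiableAt ℝ f 0)
    (hf0 : f 0 = 0)
    (r : ℝ) (hr : 0 < r)
    (hdec : ∀ x : EuclideanSpace ℝ (Fin n), 0 < ‖x‖ → ‖x‖ < r → fderiv ℝ V x (f x) < 0) :
    ∀ v : EuclideanSpace ℝ (Fin n),
      iteratedFDeriv ℝ 2 V 0 ![v, fderiv ℝ f 0 v] ≤ 0 := by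
  intro v
  let E := EuclideanSpace ℝ (Fin n)
  set A : E →L[ℝ] E := fderiv ℝ f 0 with hA
  set B : E →L[ℝ] (E →L[ℝ] ℝ) := fderiv ℝ (fderiv ℝ V) 0 with hBdef
  have hrw : iteratedFDeriv ℝ 2 V 0 ![v, A v] = B v (A v) := by
    rw [iteratedFDeriv_two_apply]
    simp
    rfl
  rw [hrw]
  by_contra hpos
  push_neg at hpos
  have hv : v ≠ 0 := by
    rintro rfl
    simp at hpos
  have hv' : 0 < ‖v‖ := norm_pos_iff.mpr hv
  -- differentiability of fderiv V at 0
  have hVat : ContDiffAt ℝ 2 V 0 := hV.contDiffAt (hU.mem_nhds h0U)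
  have hφd : DifferentiableAt ℝ (fderiv ℝ V) 0 :=
    (hVat.fderiv_right (m := 1) (by norm_num)).differentiableAt (by norm_num)
  have hB : HasFDerivAt (fderiv ℝ V) B 0 := hφd.hasFDerivAt
  have he1 : (fun x => fderiv ℝ V x - B x) =o[𝓝 (0 : E)] fun x => x := by
    simpa [hdV0] using hB.isLittleO
  have he2 : (fun x => f x - A x) =o[𝓝 (0 : E)] fun x => x := by
    simpa [hf0] using hf.hasFDerivAt.isLittleO
  have hfO : (fun x => f x) =O[𝓝 (0 : E)] fun x => x := by
    simpa [hf0] using hf.isBigO_sub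
  have hBO : (fun x : E => B x) =O[𝓝 (0 : E)] fun x => x := B.isBigO_id _
  have t1 : (fun x => (fderiv ℝ V x - B x) (f x)) =o[𝓝 (0 : E)] fun x => ‖x‖ * ‖x‖ := by
    have h1 : (fun x => (fderiv ℝ V x - B x) (f x)) =O[𝓝 (0 : E)]
        fun x => ‖fderiv ℝ V x - B x‖ * ‖f x‖ :=
      isBigO_of_le _ fun x => by
        simpa [abs_of_nonneg (mul_nonneg (norm_nonneg _) (norm_nonneg _))] using
          (fderiv ℝ V x - B x).le_opNorm (f x)
    exact h1.trans_isLittleO (he1.norm_norm.mul_isBigO hfO.norm_norm)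
  have t2 : (fun x => B x (f x - A x)) =o[𝓝 (0 : E)] fun x => ‖x‖ * ‖x‖ := by
    have h1 : (fun x => B x (f x - A x)) =O[𝓝 (0 : E)]
        fun x => ‖(B x : E →L[ℝ] ℝ)‖ * ‖f x - A x‖ :=
      isBigO_of_le _ fun x => by
        exact ((B x).le_opNorm (f x - A x)).trans (Real.le_norm_self _)
    exact h1.trans_isLittleO (hBO.norm_norm.mul_isLittleO he2.norm_norm :)
  have key : (fun x => fderiv ℝ V x (f x) - B x (A x)) =o[𝓝 (0 : E)] fun x => ‖x‖ * ‖x‖ := by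
    refine ((t1.add t2).congr_left fun x => ?_)
    simp only [ContinuousLinearMap.sub_apply, map_sub]
    ring
  -- restrict to the curve t ↦ t • v
  have hcurve : Filter.Tendsto (fun t : ℝ => t • v) (𝓝[>] (0 : ℝ)) (𝓝 (0 : E)) := by
    have : Filter.Tendsto (fun t : ℝ => t • v) (𝓝 (0 : ℝ)) (𝓝 ((0 : ℝ) • v)) :=
      (continuous_id.smul continuous_const).tendsto 0
    simpa using this.mono_left nhdsWithin_le_nhds
  have keyt := key.comp_tendsto hcurve
  set c : ℝ := B v (A v) with hc
  have hε : 0 < c / (2 * ‖v‖ ^ 2) := div_pos hpos (by nlinarith)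
  have hbound := keyt.def hε
  have hsmall : Set.Ioo (0 : ℝ) (r / ‖v‖) ∈ 𝓝[>] (0 : ℝ) :=
    Ioo_mem_nhdsGT_of_mem ⟨le_refl _, div_pos hr hv'⟩
  obtain ⟨t, ht1, ht2⟩ := (hbound.and (Filter.eventually_iff_exists_mem.mpr
    ⟨_, hsmall, fun y hy => hy⟩ : ∀ᶠ t in 𝓝[>] (0:ℝ), t ∈ Set.Ioo (0:ℝ) (r / ‖v‖))).exists
  obtain ⟨htpos, htlt⟩ := ht2
  -- compute B (t•v) (A (t•v)) = t * t * c
  have hBA : B (t • v) (A (t • v)) = t * (t * c) := by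
    simp only [map_smul, ContinuousLinearMap.smul_apply, smul_eq_mul]
    rfl
  have hnorm : ‖t • v‖ = t * ‖v‖ := by
    rw [norm_smul, Real.norm_eq_abs, abs_of_pos htpos]
  have htv_pos : 0 < ‖t • v‖ := by rw [hnorm]; exact mul_pos htpos hv'
  have htv_lt : ‖t • v‖ < r := by
    rw [hnorm]
    calc t * ‖v‖ < (r / ‖v‖) * ‖v‖ := by
          apply mul_lt_mul_of_pos_right htlt (norm_pos_iff.mpr hv)
      _ = r := div_mul_cancel₀ r (norm_ne_zero_iff.mpr hv)
  have hneg := hdec (t • v) htv_pos htv_lt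
  -- now derive a contradiction
  have ht1' : |fderiv ℝ V (t • v) (f (t • v)) - t * (t * c)| ≤
      c / (2 * ‖v‖ ^ 2) * (‖t • v‖ * ‖t • v‖) := by
    have := ht1
    simp only [Function.comp] at this
    rw [hBA] at this
    simpa [Real.norm_eq_abs, abs_of_nonneg (mul_nonneg (norm_nonneg _) (norm_nonneg _))]
      using this
  rw [hnorm] at ht1'
  have hrhs : c / (2 * ‖v‖ ^ 2) * (t * ‖v‖ * (t * ‖v‖)) = t * t * c / 2 := by
    field_simp
  rw [hrhs] at ht1'
  have habs := abs_le.mp ht1'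
  nlinarith [habs.1, habs.2, mul_pos htpos htpos, hpos]
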